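/- Let r ≥ 0, let D₀, …, D_r : S → ℤ/2ℤ and N₀, …, N_r ∈ ℤ satisfy: (a) w(D_{i−1} − D_i) + |N_{i−1} − N_i| = 1 for every 1 ≤ i ≤ r; (b) N_r = N₀; and (c) there is a set O of orbits of φ on S such that the set {s ∈ S : D_r(s) ≠ Fr(D₀)(s)} contains exactly one element of each orbit in O and no element of any orbit not in O. Then r ≥ card(O). -/

import Mathlib

/-- Let `S` be a finite set with a permutation `φ`, let `r ≥ 0`, and let
`D₀, …, D_r : S → ℤ/2ℤ` and `N₀, …, N_r ∈ ℤ` satisfy: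
(a) `w(D_{i−1} − D_i) + |N_{i−1} − N_i| = 1` for every `1 ≤ i ≤ r` (where `w` is the Hamming
distance);
(b) `N_r = N₀`;
(c) there is a set `O` of orbits of `φ` on `S` such that
`B = {s ∈ S : D_r(s) ≠ D₀(φ⁻¹ s)}` contains exactly one element of each orbit in `O` and no
element of any orbit not in `O`.
Then `r ≥ card O`.  (Orbits are encoded via the relation `Equiv.Perm.SameCycle`, whose classes
are exactly the orbits of the cyclic group generated by `φ`.) -/
theorem stmt_11 {S : Type*} [Fintype S] (φ : Equiv.Perm S) (r : ℕ)
    (D : Fin (r + 1) → S → ZMod 2) (N : Fin (r + 1) → ℤ)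
    (ha : ∀ i : Fin r,
      {s : S | D i.castSucc s ≠ D i.succ s}.ncard + (N i.castSucc - N i.succ).natAbs = 1)
    (hb : N (Fin.last r) = N 0)
    (O : Finset (Set S))
    (hOrb : ∀ T ∈ O, ∃ s : S, T = {t : S | φ.SameCycle s t})
    (hone : ∀ T ∈ O, ∃! s : S, s ∈ T ∧ D (Fin.last r) s ≠ D 0 (φ⁻¹ s))
    (hcov : ∀ s : S, D (Fin.last r) s ≠ D 0 (φ⁻¹ s) → {t : S | φ.SameCycle s t} ∈ O) :
    O.card ≤ r := by
  classical
  -- Step A: the Hamming distance between `D 0` and `D i` is at most `i`.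
  have key : ∀ i : Fin (r + 1), {s : S | D 0 s ≠ D i s}.ncard ≤ (i : ℕ) := by
    intro i
    induction i using Fin.induction with
    | zero => simp
    | succ j ih =>
      have hsub : {s : S | D 0 s ≠ D j.succ s} ⊆
          {s : S | D 0 s ≠ D j.castSucc s} ∪ {s : S | D j.castSucc s ≠ D j.succ s} := by
        intro s hs
        by_cases h : D 0 s = D j.castSucc s
        · right
          simp only [Set.mem_setOf_eq] at hs ⊢
          rw [← h]; exact hs
        · left; exact h
      have h1 : {s : S | D j.castSucc s ≠ D j.succ s}.ncard ≤ 1 := by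
        have := ha j; omega
      have h2 := Set.ncard_le_ncard hsub (Set.toFinite _)
      have h3 := Set.ncard_union_le {s : S | D 0 s ≠ D j.castSucc s}
        {s : S | D j.castSucc s ≠ D j.succ s}
      simp only [Fin.coe_castSucc] at ih
      simp only [Fin.val_succ]
      omega
  -- Step B: each orbit in `O` contains a point where `D 0` and `D (Fin.last r)` differ.
  have witness : ∀ T ∈ O, ∃ s, s ∈ T ∧ D 0 s ≠ D (Fin.last r) s := by
    intro T hT
    by_contra hno
    push_neg at hno
    obtain ⟨a, rfl⟩ := hOrb T hT
    obtain ⟨s₀, ⟨hs₀T, hs₀⟩, huniq⟩ := hone _ hT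
    set F : Finset S := (Set.toFinite {t | φ.SameCycle a t}).toFinset with hF
    have hmem : ∀ s, s ∈ F ↔ φ.SameCycle a s := by
      intro s; simp [hF, Set.Finite.mem_toFinset]
    have hsum1 : ∑ s ∈ F, (D (Fin.last r) s - D 0 (φ⁻¹ s)) = 1 := by
      rw [Finset.sum_eq_single s₀]
      · have h01 : ∀ a b : ZMod 2, a ≠ b → a - b = 1 := by decide
        exact h01 _ _ hs₀
      · intro b hb' hbne
        by_contra hc
        have hne : D (Fin.last r) b ≠ D 0 (φ⁻¹ b) := by
          intro h; exact hc (by rw [h, sub_self])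
        exact hbne (huniq b ⟨(hmem b).mp hb', hne⟩)
      · intro h; exact absurd ((hmem s₀).mpr hs₀T) h
    have hreindex : ∑ s ∈ F, D 0 (φ⁻¹ s) = ∑ s ∈ F, D 0 s := by
      apply Finset.sum_nbij' (i := fun s => φ⁻¹ s) (j := fun s => φ s)
      · intro s hs
        rw [hmem] at hs ⊢
        exact (Equiv.Perm.sameCycle_symm_apply_right).mpr hs
      · intro s hs
        rw [hmem] at hs ⊢
        exact hs.apply_right
      · intro s _; simp
      · intro s _; simp
      · intro s _; rfl
    have hsum0 : ∑ s ∈ F, (D (Fin.last r) s - D 0 (φ⁻¹ s)) = 0 := by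
      have hcongr : ∑ s ∈ F, D (Fin.last r) s = ∑ s ∈ F, D 0 s := by
        apply Finset.sum_congr rfl
        intro s hs
        exact (hno s ((hmem s).mp hs)).symm
      rw [Finset.sum_sub_distrib, hcongr, hreindex, sub_self]
    rw [hsum1] at hsum0
    exact one_ne_zero hsum0
  -- Step C: build an injection from `O` into the difference set.
  rcases O.eq_empty_or_nonempty with hOe | ⟨T₀, hT₀⟩
  · simp [hOe]
  obtain ⟨s₁, _⟩ := hOrb T₀ hT₀
  have hw : ∀ T : Set S, T ∈ O → {w : S // w ∈ T ∧ D 0 w ≠ D (Fin.last r) w} := by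
    intro T hT
    exact Classical.indefiniteDescription _ (witness T hT)
  set f : Set S → S := fun T => if h : T ∈ O then (hw T h).1 else s₁ with hf
  set G : Finset S := (Set.toFinite {s : S | D 0 s ≠ D (Fin.last r) s}).toFinset with hG
  have hcard : O.card ≤ G.card := by
    apply Finset.card_le_card_of_injOn f
    · intro T hT
      simp only [hf, dif_pos (Finset.mem_coe.mp hT)]
      have := (hw T hT).2.2
      simp [hG, Set.Finite.mem_toFinset, this]
    · intro T₁ h₁ T₂ h₂ hfe
      simp only [Finset.mem_coe] at h₁ h₂
      simp only [hf, dif_pos h₁, dif_pos h₂] at hfe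
      obtain ⟨a₁, hA₁⟩ := hOrb T₁ h₁
      obtain ⟨a₂, hA₂⟩ := hOrb T₂ h₂
      have hm₁ : φ.SameCycle a₁ ((hw T₂ h₂).1) := by
        have h := (hw T₁ h₁).2.1
        rw [hfe] at h
        exact (Set.ext_iff.mp hA₁ _).mp h
      have hm₂ : φ.SameCycle a₂ ((hw T₂ h₂).1) :=
        (Set.ext_iff.mp hA₂ _).mp (hw T₂ h₂).2.1
      rw [hA₁, hA₂]
      ext t
      simp only [Set.mem_setOf_eq]
      constructor
      · intro h; exact hm₂.trans ((hm₁.symm).trans h)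
      · intro h; exact hm₁.trans ((hm₂.symm).trans h)
  have hGcard : G.card = {s : S | D 0 s ≠ D (Fin.last r) s}.ncard := by
    rw [hG, Set.ncard_eq_toFinset_card']
    simp
  have := key (Fin.last r)
  simp only [Fin.val_last] at this
  omega
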